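/- Let k > 0, B > 0, l > 1 and T₀ > 0. Then there is no function V : [0,T₀] → ℝ which is continuous on [0,T₀], differentiable on [0,T₀], satisfies V(t) > 0 and V'(t) ≥ k·V(t)^l − B·V(t) for all t ∈ [0,T₀], and V(0) ≥ { (k/B)·(1 − exp(−B·(l−1)·T₀)) }^{-1/(l-1)}. -/

import Mathlib

/-- Bernoulli-type blow-up (Theorem 4.1, case `m ≤ 1`): for `k, B > 0`, `l > 1`,
`T₀ > 0`, there is no positive function `V` on `[0,T₀]`, continuous and
differentiable there, with `V' ≥ k·V^l − B·V` and
`V(0) ≥ ((k/B)·(1 − exp(−B·(l−1)·T₀)))^(−1/(l−1))`. -/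
theorem stmt_12 (k B l T₀ : ℝ) (hk : 0 < k) (hB : 0 < B) (hl : 1 < l)
    (hT₀ : 0 < T₀) :
    ¬ ∃ V : ℝ → ℝ,
        ContinuousOn V (Set.Icc 0 T₀) ∧
        DifferentiableOn ℝ V (Set.Icc 0 T₀) ∧
        (∀ t ∈ Set.Icc (0 : ℝ) T₀, 0 < V t) ∧
        (∀ t ∈ Set.Icc (0 : ℝ) T₀,
          k * V t ^ l - B * V t ≤ derivWithin V (Set.Icc 0 T₀) t) ∧
        (k / B * (1 - Real.exp (-(B * (l - 1) * T₀)))) ^ (-(1 / (l - 1))) ≤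
          V 0 := by
  rintro ⟨V, hc, hd, hpos, hineq, h0⟩
  set s : Set ℝ := Set.Icc 0 T₀ with hs
  set c : ℝ := B * (l - 1) with hc'
  have hcpos : 0 < c := mul_pos hB (by linarith)
  set G : ℝ → ℝ := fun t => ((V t) ^ (1 - l) - k / B) * Real.exp (-(c * t)) with hG
  -- derivative of G within s
  have hDer : ∀ t ∈ s, HasDerivWithinAt G
      ((derivWithin V s t * (1 - l) * V t ^ (1 - l - 1)) * Real.exp (-(c * t))
        + ((V t) ^ (1 - l) - k / B) * (Real.exp (-(c * t)) * (-c))) s t := by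
    intro t ht
    have hV' : HasDerivWithinAt V (derivWithin V s t) s t :=
      (hd t ht).hasDerivWithinAt
    have h1 : HasDerivWithinAt (fun u => (V u) ^ (1 - l) - k / B)
        (derivWithin V s t * (1 - l) * V t ^ (1 - l - 1)) s t :=
      (hV'.rpow_const (Or.inl (hpos t ht).ne')).sub_const _
    have h2 : HasDerivWithinAt (fun u : ℝ => Real.exp (-(c * u)))
        (Real.exp (-(c * t)) * (-c)) s t := by
      have := (((hasDerivAt_id t).const_mul c).neg).exp
      simpa using this.hasDerivWithinAt
    exact h1.mul h2
  -- the derivative is nonpositive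
  have hDpos : ∀ t ∈ s,
      (derivWithin V s t * (1 - l) * V t ^ (1 - l - 1)) * Real.exp (-(c * t))
        + ((V t) ^ (1 - l) - k / B) * (Real.exp (-(c * t)) * (-c)) ≤ 0 := by
    intro t ht
    have hv : 0 < V t := hpos t ht
    have hE : 0 < Real.exp (-(c * t)) := Real.exp_pos _
    have hw : k * V t ^ l - B * V t ≤ derivWithin V s t := hineq t ht
    have hmul1 : V t ^ l * V t ^ (1 - l - 1) = 1 := by
      rw [← Real.rpow_add hv]; norm_num
    have hmul2 : V t * V t ^ (1 - l - 1) = V t ^ (1 - l) := by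
      nth_rewrite 1 [← Real.rpow_one (V t)]
      rw [← Real.rpow_add hv]; ring_nf
    have hvp : 0 < V t ^ (1 - l - 1) := Real.rpow_pos_of_pos hv _
    -- multiply the differential inequality by V t ^ (1-l-1) > 0
    have key : k - B * V t ^ (1 - l) ≤ derivWithin V s t * V t ^ (1 - l - 1) := by
      have := mul_le_mul_of_nonneg_right hw hvp.le
      calc k - B * V t ^ (1 - l)
          = (k * V t ^ l - B * V t) * V t ^ (1 - l - 1) := by
            rw [sub_mul, mul_assoc, mul_assoc, hmul1, hmul2]; ring
        _ ≤ derivWithin V s t * V t ^ (1 - l - 1) := this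
    have hll : (0:ℝ) < l - 1 := by linarith
    have h1 : 0 ≤ derivWithin V s t * V t ^ (1 - l - 1) + B * V t ^ (1 - l) - k := by
      linarith
    have hDeq : (derivWithin V s t * (1 - l) * V t ^ (1 - l - 1)) * Real.exp (-(c * t))
        + ((V t) ^ (1 - l) - k / B) * (Real.exp (-(c * t)) * (-c))
        = -(Real.exp (-(c * t)) * ((l - 1) *
            (derivWithin V s t * V t ^ (1 - l - 1) + B * V t ^ (1 - l) - k))) := by
      rw [hc']; field_simp; ring
    rw [hDeq]
    exact neg_nonpos.mpr (mul_nonneg hE.le (mul_nonneg hll.le h1))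
  -- G is antitone on s
  have hconv : Convex ℝ s := convex_Icc 0 T₀
  have hGanti : AntitoneOn G s := by
    apply antitoneOn_of_deriv_nonpos hconv
    · exact ((hc.rpow_const fun x hx => Or.inl (hpos x hx).ne').sub
        continuousOn_const).mul
        (Real.continuous_exp.comp (by continuity)).continuousOn
    · intro x hx
      rw [interior_Icc] at hx
      have hmem : x ∈ s := Set.mem_Icc_of_Ioo hx
      have : HasDerivAt G _ x :=
        (hDer x hmem).hasDerivAt (Icc_mem_nhds hx.1 hx.2)
      exact this.differentiableAt.differentiableWithinAt
    · intro x hx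
      rw [interior_Icc] at hx
      have hmem : x ∈ s := Set.mem_Icc_of_Ioo hx
      have hda : HasDerivAt G _ x :=
        (hDer x hmem).hasDerivAt (Icc_mem_nhds hx.1 hx.2)
      rw [hda.deriv]
      exact hDpos x hmem
  -- evaluate the monotonicity between 0 and T₀
  have h0s : (0:ℝ) ∈ s := Set.left_mem_Icc.mpr hT₀.le
  have hTs : T₀ ∈ s := Set.right_mem_Icc.mpr hT₀.le
  have hGT := hGanti h0s hTs hT₀.le
  -- bound on G 0
  set C : ℝ := k / B * (1 - Real.exp (-(c * T₀))) with hCdef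
  have hE1 : Real.exp (-(c * T₀)) < 1 := by
    rw [Real.exp_lt_one_iff]
    nlinarith [mul_pos hcpos hT₀]
  have hCpos : 0 < C := by
    apply mul_pos (div_pos hk hB); linarith
  have hV0 : V 0 ^ (1 - l) ≤ C := by
    have h0' : C ^ (-(1 / (l - 1))) ≤ V 0 := by
      have : B * (l - 1) * T₀ = c * T₀ := by ring
      rw [hCdef, ← this]; exact h0
    have hCp : 0 < C ^ (-(1 / (l - 1))) := Real.rpow_pos_of_pos hCpos _
    have := Real.rpow_le_rpow_of_nonpos hCp h0' (by linarith : (1:ℝ) - l ≤ 0)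
    calc V 0 ^ (1 - l) ≤ (C ^ (-(1 / (l - 1)))) ^ (1 - l) := this
      _ = C := by
        rw [← Real.rpow_mul hCpos.le]
        have : -(1 / (l - 1)) * (1 - l) = 1 := by
          field_simp
          rw [← neg_div, neg_sub]; exact div_self (by linarith)
        rw [this, Real.rpow_one]
  -- contradiction
  have hG0 : G 0 = V 0 ^ (1 - l) - k / B := by simp [hG]
  have hGT0 : G T₀ = (V T₀ ^ (1 - l) - k / B) * Real.exp (-(c * T₀)) := rfl
  have hvT : 0 < V T₀ ^ (1 - l) := Real.rpow_pos_of_pos (hpos T₀ hTs) _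
  have hET : 0 < Real.exp (-(c * T₀)) := Real.exp_pos _
  rw [hG0, hGT0] at hGT
  have hCeq : C = k / B * (1 - Real.exp (-(c * T₀))) := hCdef
  nlinarith [mul_pos hvT hET, div_pos hk hB]
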